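/- If the innovations of the INMA(q₁,q₂) random field are Poisson(λ) distributed, then the observation X_{s,t} is Poisson distributed with parameter λ·β_•, where β_• = Σ_{i,j} β_{ij}. -/

import Mathlib

open MeasureTheory ProbabilityTheory Real
open scoped NNReal ENNReal Nat



lemma poisson_singleton (r : ℝ≥0) (n : ℕ) :
    poissonMeasure r {n} = ENNReal.ofReal (poissonPMFReal r n) := by
  rw [poissonMeasure_singleton]
  rfl

lemma map_eq_poisson_iff {Ω : Type*} [MeasurableSpace Ω] (μ : Measure Ω) (Z : Ω → ℕ)
    (hZ : Measurable Z) (r : ℝ≥0) :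
    Measure.map Z μ = poissonMeasure r ↔
      ∀ k, μ {ω | Z ω = k} = ENNReal.ofReal (poissonPMFReal r k) := by
  rw [MeasureTheory.Measure.ext_iff_singleton]
  refine forall_congr' fun k => ?_
  rw [Measure.map_apply hZ (measurableSet_singleton k), poisson_singleton]
  rfl

lemma hasSum_exp_div (x : ℝ) : HasSum (fun n : ℕ => x ^ n / n !) (Real.exp x) := by
  rw [exp_eq_exp_ℝ]
  exact NormedSpace.expSeries_div_hasSum_exp x

lemma hasSum_thin (a b : ℝ) (k : ℕ) :
    HasSum (fun n : ℕ =>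
        Real.exp (-a) * a ^ n / n ! * ((n.choose k : ℝ) * b ^ k * (1 - b) ^ (n - k)))
      (Real.exp (-(b * a)) * (b * a) ^ k / k !) := by
  set f : ℕ → ℝ := fun n =>
    Real.exp (-a) * a ^ n / n ! * ((n.choose k : ℝ) * b ^ k * (1 - b) ^ (n - k)) with hf
  have hzero : ∀ i ∈ Finset.range k, f i = 0 := by
    intro i hi
    simp only [hf, Nat.choose_eq_zero_of_lt (Finset.mem_range.mp hi)]
    push_cast; ring
  have key : (fun m : ℕ => f (m + k)) =
      fun m => (Real.exp (-a) * b ^ k * a ^ k / k !) * (((1 - b) * a) ^ m / m !) := by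
    funext m
    have hc : ((m + k).choose k : ℝ) * (k ! : ℝ) * (m ! : ℝ) = ((m + k)! : ℝ) := by
      exact_mod_cast congrArg (Nat.cast (R := ℝ))
        (by simpa using Nat.choose_mul_factorial_mul_factorial (Nat.le_add_left k m))
    have h1 : ((m + k)! : ℝ) ≠ 0 := Nat.cast_ne_zero.mpr (Nat.factorial_ne_zero _)
    have h2 : (k ! : ℝ) ≠ 0 := Nat.cast_ne_zero.mpr (Nat.factorial_ne_zero _)
    have h3 : (m ! : ℝ) ≠ 0 := Nat.cast_ne_zero.mpr (Nat.factorial_ne_zero _)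
    simp only [hf, Nat.add_sub_cancel]
    rw [mul_pow, pow_add]
    field_simp
    linear_combination ((a ^ m * a ^ k) * (b ^ k * (1 - b) ^ m)) * hc
  have hS : HasSum (fun m : ℕ => f (m + k))
      ((Real.exp (-(b * a)) * (b * a) ^ k / k !) - ∑ i ∈ Finset.range k, f i) := by
    rw [Finset.sum_eq_zero hzero, sub_zero, key]
    have h := (hasSum_exp_div ((1 - b) * a)).mul_left (Real.exp (-a) * b ^ k * a ^ k / k !)
    have hval : Real.exp (-a) * b ^ k * a ^ k / k ! * Real.exp ((1 - b) * a)
        = Real.exp (-(b * a)) * (b * a) ^ k / k ! := by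
      rw [show Real.exp (-(b * a)) = Real.exp (-a) * Real.exp ((1 - b) * a) from by
        rw [← Real.exp_add]; ring_nf, mul_pow]
      ring
    rwa [hval] at h
  exact (hasSum_nat_add_iff' k).mp hS


def IsBinomialThinning {Ω : Type*} [MeasurableSpace Ω] (μ : Measure Ω) (β : ℝ)
    (Y T : Ω → ℕ) : Prop :=
  ∀ n k : ℕ, μ {ω | Y ω = n ∧ T ω = k}
    = μ {ω | Y ω = n} * ENNReal.ofReal ((n.choose k : ℝ) * β ^ k * (1 - β) ^ (n - k))

lemma thinning_map {Ω : Type*} [MeasurableSpace Ω] (μ : Measure Ω) (β : ℝ≥0) (hβ : β ≤ 1)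
    (a : ℝ≥0) (Y T : Ω → ℕ) (hY : Measurable Y) (hT : Measurable T)
    (hYp : Measure.map Y μ = poissonMeasure a)
    (h : IsBinomialThinning μ (β : ℝ) Y T) :
    Measure.map T μ = poissonMeasure (β * a) := by
  have hb1 : (0:ℝ) ≤ 1 - (β:ℝ) := by
    have : (β:ℝ) ≤ 1 := by exact_mod_cast hβ
    linarith
  rw [map_eq_poisson_iff μ T hT]
  intro k
  have hYs : ∀ n, μ {ω | Y ω = n} = ENNReal.ofReal (poissonPMFReal a n) :=
    (map_eq_poisson_iff μ Y hY a).mp hYp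
  have hset : {ω | T ω = k} = ⋃ n : ℕ, {ω | Y ω = n ∧ T ω = k} := by
    ext ω; simp
  have hmeas : ∀ n : ℕ, MeasurableSet {ω | Y ω = n ∧ T ω = k} := fun n =>
    (hY (measurableSet_singleton n)).inter (hT (measurableSet_singleton k))
  have hdis : Pairwise (Function.onFun Disjoint fun n : ℕ => {ω | Y ω = n ∧ T ω = k}) := by
    intro m n hmn
    simp only [Function.onFun, Set.disjoint_left]
    rintro ω ⟨h1, -⟩ ⟨h2, -⟩
    exact hmn (h1 ▸ h2 ▸ rfl)
  rw [hset, measure_iUnion hdis hmeas]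
  have hnn : ∀ n : ℕ, 0 ≤ poissonPMFReal a n *
      ((n.choose k : ℝ) * (β:ℝ) ^ k * (1 - (β:ℝ)) ^ (n - k)) := by
    intro n
    have h0 := poissonPMFReal_nonneg (r := a) (n := n)
    positivity
  have hterm : ∀ n : ℕ, μ {ω | Y ω = n ∧ T ω = k}
      = ENNReal.ofReal (poissonPMFReal a n *
          ((n.choose k : ℝ) * (β:ℝ) ^ k * (1 - (β:ℝ)) ^ (n - k))) := by
    intro n
    rw [h n k, hYs n, ← ENNReal.ofReal_mul poissonPMFReal_nonneg]
  have hs : HasSum (fun n : ℕ => poissonPMFReal a n *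
        ((n.choose k : ℝ) * (β:ℝ) ^ k * (1 - (β:ℝ)) ^ (n - k)))
      (poissonPMFReal (β * a) k) := by
    have := hasSum_thin (a:ℝ) (β:ℝ) k
    simpa [poissonPMFReal, NNReal.coe_mul] using this
  calc ∑' n, μ {ω | Y ω = n ∧ T ω = k}
      = ∑' n, ENNReal.ofReal (poissonPMFReal a n *
          ((n.choose k : ℝ) * (β:ℝ) ^ k * (1 - (β:ℝ)) ^ (n - k))) := by
        exact tsum_congr hterm
    _ = ENNReal.ofReal (poissonPMFReal (β * a) k) := by
        rw [← ENNReal.ofReal_tsum_of_nonneg hnn hs.summable, hs.tsum_eq]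

lemma conv_real (a b : ℝ) (k : ℕ) :
    ∑ j ∈ Finset.range (k + 1),
        (Real.exp (-a) * a ^ j / j !) * (Real.exp (-b) * b ^ (k - j) / (k - j)!)
      = Real.exp (-(a + b)) * (a + b) ^ k / k ! := by
  rw [add_pow]
  rw [Finset.mul_sum, Finset.sum_div]
  refine Finset.sum_congr rfl fun j hj => ?_
  have hjk : j ≤ k := Nat.lt_succ_iff.mp (Finset.mem_range.mp hj)
  have hc : ((k.choose j : ℝ)) * (j ! : ℝ) * ((k - j)! : ℝ) = (k ! : ℝ) := by
    exact_mod_cast congrArg (Nat.cast (R := ℝ))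
      (Nat.choose_mul_factorial_mul_factorial hjk)
  have he : Real.exp (-a) * Real.exp (-b) = Real.exp (-(a + b)) := by
    rw [← Real.exp_add]; ring_nf
  have h2 : (k ! : ℝ) ≠ 0 := Nat.cast_ne_zero.mpr (Nat.factorial_ne_zero _)
  have h3 : (j ! : ℝ) ≠ 0 := Nat.cast_ne_zero.mpr (Nat.factorial_ne_zero _)
  have h4 : ((k - j)! : ℝ) ≠ 0 := Nat.cast_ne_zero.mpr (Nat.factorial_ne_zero _)
  field_simp
  rw [← he]
  linear_combination (-(Real.exp (-a) * Real.exp (-b) * a ^ j * b ^ (k - j))) * hc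

lemma add_map_poisson {Ω : Type*} [MeasurableSpace Ω] (μ : Measure Ω) (a b : ℝ≥0)
    (Z₁ Z₂ : Ω → ℕ) (h1m : Measurable Z₁) (h2m : Measurable Z₂)
    (h1 : Measure.map Z₁ μ = poissonMeasure a) (h2 : Measure.map Z₂ μ = poissonMeasure b)
    (hind : IndepFun Z₁ Z₂ μ) :
    Measure.map (fun ω => Z₁ ω + Z₂ ω) μ = poissonMeasure (a + b) := by
  rw [map_eq_poisson_iff μ (fun ω => Z₁ ω + Z₂ ω) (h1m.add h2m)]
  intro k
  have h1s := (map_eq_poisson_iff μ Z₁ h1m a).mp h1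
  have h2s := (map_eq_poisson_iff μ Z₂ h2m b).mp h2
  have hset : {ω | Z₁ ω + Z₂ ω = k}
      = ⋃ j ∈ Finset.range (k + 1), (Z₁ ⁻¹' {j} ∩ Z₂ ⁻¹' {k - j}) := by
    ext ω
    simp only [Set.mem_setOf_eq, Set.mem_iUnion, Finset.mem_range, Set.mem_inter_iff,
      Set.mem_preimage, Set.mem_singleton_iff]
    constructor
    · intro h
      exact ⟨Z₁ ω, by omega, rfl, by omega⟩
    · rintro ⟨j, hj, rfl, h2⟩
      omega
  rw [hset, measure_biUnion_finset ?dis fun j _ =>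
    (h1m (measurableSet_singleton j)).inter (h2m (measurableSet_singleton (k - j)))]
  case dis =>
    intro m _ n _ hmn
    simp only [Set.disjoint_left]
    rintro ω ⟨h1', -⟩ ⟨h2', -⟩
    exact hmn ((Set.mem_singleton_iff.mp h1') ▸ (Set.mem_singleton_iff.mp h2') ▸ rfl)
  have hterm : ∀ j ∈ Finset.range (k + 1), μ (Z₁ ⁻¹' {j} ∩ Z₂ ⁻¹' {k - j})
      = ENNReal.ofReal (poissonPMFReal a j * poissonPMFReal b (k - j)) := by
    intro j _
    rw [hind.measure_inter_preimage_eq_mul _ _ (measurableSet_singleton j)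
      (measurableSet_singleton (k - j))]
    have e1 : Z₁ ⁻¹' {j} = {ω | Z₁ ω = j} := rfl
    have e2 : Z₂ ⁻¹' {k - j} = {ω | Z₂ ω = k - j} := rfl
    rw [e1, e2, h1s j, h2s (k - j), ← ENNReal.ofReal_mul poissonPMFReal_nonneg]
  rw [Finset.sum_congr rfl hterm,
    ← ENNReal.ofReal_sum_of_nonneg (fun j _ => by
      exact mul_nonneg poissonPMFReal_nonneg poissonPMFReal_nonneg)]
  congr 1
  have := conv_real (a : ℝ) (b : ℝ) k
  simpa [poissonPMFReal, NNReal.coe_add] using this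

lemma finsum_map_poisson {Ω : Type*} [MeasurableSpace Ω] (μ : Measure Ω)
    [IsProbabilityMeasure μ] {ι : Type*} (Z : ι → Ω → ℕ) (r : ι → ℝ≥0)
    (hmeas : ∀ i, Measurable (Z i))
    (hind : iIndepFun Z μ)
    (s : Finset ι) (hs : s.Nonempty)
    (h : ∀ i ∈ s, Measure.map (Z i) μ = poissonMeasure (r i)) :
    Measure.map (fun ω => ∑ i ∈ s, Z i ω) μ = poissonMeasure (∑ i ∈ s, r i) := by
  classical
  induction hs using Finset.Nonempty.cons_induction with
  | singleton i => simpa using h i (by simp)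
  | cons i s hi hs ih =>
    rw [Finset.sum_cons]
    have hsum : (fun ω => ∑ j ∈ Finset.cons i s hi, Z j ω)
        = fun ω => (∑ j ∈ s, Z j ω) + Z i ω := by
      funext ω; rw [Finset.sum_cons]; ring
    rw [hsum]
    have hindep : IndepFun (∑ j ∈ s, Z j) (Z i) μ :=
      hind.indepFun_finsetSum_of_notMem hmeas hi
    have hindep' : IndepFun (fun ω => ∑ j ∈ s, Z j ω) (Z i) μ := by
      have : (∑ j ∈ s, Z j) = fun ω => ∑ j ∈ s, Z j ω := by
        funext ω; simp [Finset.sum_apply]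
      rwa [this] at hindep
    rw [add_comm (r i)]
    exact add_map_poisson μ _ _ _ _ (Finset.measurable_sum s fun j _ => hmeas j) (hmeas i)
      (ih fun j hj => h j (Finset.mem_cons_of_mem hj)) (h i (Finset.mem_cons_self i s))
      hindep'

theorem INMA_poisson
    {Ω : Type*} [MeasurableSpace Ω] (μ : Measure Ω) [IsProbabilityMeasure μ]
    (q₁ q₂ : ℕ) (X : ℤ → ℤ → Ω → ℕ) (ε : ℤ → ℤ → Ω → ℕ)
    (W : ℕ → ℕ → ℤ → ℤ → Ω → ℕ)
    (β : ℕ → ℕ → ℝ≥0)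
    (hβ : ∀ i ∈ Finset.range (q₁ + 1), ∀ j ∈ Finset.range (q₂ + 1), β i j ≤ 1)
    (lam : ℝ≥0)
    (hεmeas : ∀ s t, Measurable (ε s t))
    (hWmeas : ∀ i j s t, Measurable (W i j s t))
    (hεPoisson : ∀ s t : ℤ, Measure.map (ε s t) μ = poissonMeasure lam)
    (hthin : ∀ i ∈ Finset.range (q₁ + 1), ∀ j ∈ Finset.range (q₂ + 1), ∀ s t : ℤ,
      IsBinomialThinning μ (β i j : ℝ) (ε (s - (i : ℤ)) (t - (j : ℤ))) (W i j s t))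
    (hWindep : ∀ s t : ℤ,
      iIndepFun (fun p : ℕ × ℕ => W p.1 p.2 s t) μ)
    (hrec : ∀ s t ω, X s t ω
      = ∑ i ∈ Finset.range (q₁ + 1), ∑ j ∈ Finset.range (q₂ + 1), W i j s t ω) :
    ∀ s t : ℤ, Measure.map (X s t) μ
      = poissonMeasure
          (lam * ∑ i ∈ Finset.range (q₁ + 1), ∑ j ∈ Finset.range (q₂ + 1), β i j) := by
  intro s t
  classical
  set F := (Finset.range (q₁ + 1)) ×ˢ (Finset.range (q₂ + 1)) with hF
  have hXeq : X s t = fun ω => ∑ p ∈ F, W p.1 p.2 s t ω := by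
    funext ω
    rw [hrec s t ω, hF, Finset.sum_product]
  have hFne : F.Nonempty :=
    Finset.Nonempty.product (Finset.nonempty_range_iff.mpr (Nat.succ_ne_zero q₁))
      (Finset.nonempty_range_iff.mpr (Nat.succ_ne_zero q₂))
  have hsingle : ∀ p ∈ F, Measure.map (W p.1 p.2 s t) μ
      = poissonMeasure (β p.1 p.2 * lam) := by
    rintro ⟨i, j⟩ hp
    rw [hF, Finset.mem_product] at hp
    exact thinning_map μ (β i j) (hβ i hp.1 j hp.2) lam _ _
      (hεmeas _ _) (hWmeas i j s t) (hεPoisson _ _) (hthin i hp.1 j hp.2 s t)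
  have hmap := finsum_map_poisson μ (fun p : ℕ × ℕ => W p.1 p.2 s t)
    (fun p : ℕ × ℕ => β p.1 p.2 * lam) (fun p => hWmeas p.1 p.2 s t) (hWindep s t)
    F hFne hsingle
  rw [hXeq, hmap]
  congr 1
  rw [hF, Finset.sum_product, Finset.mul_sum]
  exact Finset.sum_congr rfl fun i _ => by
    rw [Finset.mul_sum]
    exact Finset.sum_congr rfl fun j _ => mul_comm _ _
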